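/- Let G be a 2-ichromatic ordered graph with parts v_1, ..., v_m and v_{m+1}, ..., v_{m+n}, and suppose that v_1 v_{m+1}, v_m v_{m+n}, and v_m v_{m+1} are edges of G. Then R(G) ≥ 5r + 1, where r = min(m,n) - 1. -/

import Mathlib

/-- A `t`-edge-coloring `c` of the complete graph on the ordered vertex set `Fin N`
contains a monochromatic ordered copy of the ordered graph `G` on `Fin M`. -/
def HasMonoCopy {M N t : ℕ} (G : SimpleGraph (Fin M)) (c : Fin N → Fin N → Fin t) : Prop :=
  ∃ k : Fin t, ∃ f : Fin M → Fin N, StrictMono f ∧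
    ∀ u v : Fin M, u < v → G.Adj u v → c (f u) (f v) = k

/-- The `t`-color ordered Ramsey number of the ordered graph `G`: the least `N` such that
every `t`-coloring of the edges of the complete graph on `Fin N` contains a monochromatic
ordered copy of `G`. -/
noncomputable def orderedRamsey {M : ℕ} (t : ℕ) (G : SimpleGraph (Fin M)) : ℕ :=
  sInf {N : ℕ | ∀ c : Fin N → Fin N → Fin t, HasMonoCopy G c}

/-- An interval coloring of an ordered graph with `k` parts, encoded as a monotone
surjection onto `Fin k` whose fibers (the parts, which are intervals of consecutive
vertices) are independent sets. -/
def IsIntervalColoring {N k : ℕ} (G : SimpleGraph (Fin N)) (p : Fin N → Fin k) : Prop :=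
  Monotone p ∧ Function.Surjective p ∧ ∀ u v : Fin N, G.Adj u v → p u ≠ p v

/-- The interval chromatic number of an ordered graph. -/
noncomputable def intervalChromatic {N : ℕ} (G : SimpleGraph (Fin N)) : ℕ :=
  sInf {k : ℕ | ∃ p : Fin N → Fin k, IsIntervalColoring G p}

/- ### Auxiliary material -/

private lemma fin2_eq_one (x : Fin 2) (h : ¬ x = 0) : x = 1 := by
  match x with
  | 0 => exact absurd rfl h
  | 1 => rfl

/-- Greedy step: a pre-monochromatic sequence of length `k` inside any set of size `2^k`. -/
private lemma greedy (c : ℕ → ℕ → Fin 2) :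
    ∀ (k : ℕ) (S : Finset ℕ), 2 ^ k ≤ S.card →
    ∃ (f : Fin k → ℕ) (b : Fin k → Fin 2), StrictMono f ∧ (∀ i, f i ∈ S) ∧
      ∀ i j : Fin k, i < j → c (f i) (f j) = b i := by
  intro k
  induction k with
  | zero =>
      intro S _
      exact ⟨fun i => i.elim0, fun i => i.elim0, fun i => i.elim0, fun i => i.elim0,
        fun i => i.elim0⟩
  | succ k ih =>
      intro S hS
      have hpos : 0 < S.card := lt_of_lt_of_le (Nat.pow_pos (by norm_num)) hS
      have hne : S.Nonempty := Finset.card_pos.mp hpos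
      set a := S.min' hne with ha
      set T := S.erase a with hT
      have hTcard : T.card = S.card - 1 := Finset.card_erase_of_mem (S.min'_mem hne)
      have hsplit := Finset.card_filter_add_card_filter_not
        (s := T) (p := fun t => c a t = 0)
      have hor : 2 ^ k ≤ (T.filter (fun t => c a t = 0)).card ∨
          2 ^ k ≤ (T.filter (fun t => ¬ c a t = 0)).card := by
        have hpow : 2 ^ (k + 1) = 2 ^ k + 2 ^ k := by ring
        omega
      obtain ⟨col, Tb, hTbT, hTbcard, hTbcol⟩ :
          ∃ (col : Fin 2) (Tb : Finset ℕ), Tb ⊆ T ∧ 2 ^ k ≤ Tb.card ∧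
            ∀ t ∈ Tb, c a t = col := by
        rcases hor with h | h
        · exact ⟨0, _, Finset.filter_subset _ _, h,
            fun t ht => (Finset.mem_filter.mp ht).2⟩
        · exact ⟨1, _, Finset.filter_subset _ _, h,
            fun t ht => fin2_eq_one _ (Finset.mem_filter.mp ht).2⟩
      obtain ⟨f, b, hmono, hmem, hcol⟩ := ih Tb hTbcard
      have hgt : ∀ i, a < f i := by
        intro i
        have h1 : f i ∈ T := hTbT (hmem i)
        have h2 : f i ∈ S := Finset.mem_of_mem_erase h1
        have h3 : f i ≠ a := Finset.ne_of_mem_erase h1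
        exact lt_of_le_of_ne (S.min'_le _ h2) (Ne.symm h3)
      refine ⟨fun i => if h : (i : ℕ) = 0 then a else f ⟨i - 1, by omega⟩,
        fun i => if h : (i : ℕ) = 0 then col else b ⟨i - 1, by omega⟩, ?_, ?_, ?_⟩
      · intro i j hij
        rw [Fin.lt_def] at hij
        by_cases hi : (i : ℕ) = 0
        · have hj : (j : ℕ) ≠ 0 := by omega
          simp only [dif_pos hi, dif_neg hj]
          exact hgt _
        · have hj : (j : ℕ) ≠ 0 := by omega
          simp only [dif_neg hi, dif_neg hj]
          exact hmono (Fin.mk_lt_mk.mpr (by omega))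
      · intro i
        by_cases hi : (i : ℕ) = 0
        · simp only [dif_pos hi]; exact S.min'_mem hne
        · simp only [dif_neg hi]
          exact Finset.mem_of_mem_erase (hTbT (hmem _))
      · intro i j hij
        rw [Fin.lt_def] at hij
        by_cases hi : (i : ℕ) = 0
        · have hj : (j : ℕ) ≠ 0 := by omega
          simp only [dif_pos hi, dif_neg hj]
          exact hTbcol _ (hmem _)
        · have hj : (j : ℕ) ≠ 0 := by omega
          simp only [dif_neg hi, dif_neg hj]
          exact hcol _ _ (Fin.mk_lt_mk.mpr (by omega))

/-- Every 2-coloring of `Fin (2^(2M))` has a monochromatic ordered copy of any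
ordered graph on `Fin M`: a crude ordered Ramsey upper bound. -/
private lemma ramsey_exists {M : ℕ} (G : SimpleGraph (Fin M)) :
    ∀ c : Fin (2 ^ (2 * M)) → Fin (2 ^ (2 * M)) → Fin 2, HasMonoCopy G c := by
  intro c
  obtain ⟨c', hc'⟩ : ∃ c' : ℕ → ℕ → Fin 2,
      ∀ (x y : Fin (2 ^ (2 * M))), c' x y = c x y :=
    ⟨fun x y => if hx : x < 2 ^ (2 * M) then
        (if hy : y < 2 ^ (2 * M) then c ⟨x, hx⟩ ⟨y, hy⟩ else 0) else 0,
     fun x y => by simp [x.isLt, y.isLt]⟩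
  obtain ⟨f, b, hmono, hmem, hcol⟩ := greedy c' (2 * M) (Finset.range (2 ^ (2 * M)))
    (by rw [Finset.card_range])
  have hflt : ∀ i, f i < 2 ^ (2 * M) := fun i => Finset.mem_range.mp (hmem i)
  -- pigeonhole on the tags b
  have hsplit := Finset.card_filter_add_card_filter_not
    (s := (Finset.univ : Finset (Fin (2 * M)))) (p := fun i => b i = 0)
  have huniv : (Finset.univ : Finset (Fin (2 * M))).card = 2 * M := by simp
  have hor : M ≤ (Finset.univ.filter (fun i => b i = 0)).card ∨
      M ≤ (Finset.univ.filter (fun i => ¬ b i = 0)).card := by omega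
  obtain ⟨col, A, hAcard, hAcol⟩ :
      ∃ (col : Fin 2) (A : Finset (Fin (2 * M))), M ≤ A.card ∧ ∀ i ∈ A, b i = col := by
    rcases hor with h | h
    · exact ⟨0, _, h, fun i hi => (Finset.mem_filter.mp hi).2⟩
    · exact ⟨1, _, h, fun i hi => fin2_eq_one _ (Finset.mem_filter.mp hi).2⟩
  have hembmem : ∀ i, A.orderEmbOfCardLe hAcard i ∈ A :=
    fun i => A.orderEmbOfCardLe_mem hAcard i
  refine ⟨col, fun i => ⟨f (A.orderEmbOfCardLe hAcard i), hflt _⟩, ?_, ?_⟩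
  · intro i j hij
    exact Fin.mk_lt_mk.mpr (hmono ((A.orderEmbOfCardLe hAcard).strictMono hij))
  · intro u v huv _
    have h2 : c' (f (A.orderEmbOfCardLe hAcard u)) (f (A.orderEmbOfCardLe hAcard v)) = col := by
      rw [hcol _ _ ((A.orderEmbOfCardLe hAcard).strictMono huv)]
      exact hAcol _ (hembmem u)
    exact (hc' ⟨f (A.orderEmbOfCardLe hAcard u), hflt _⟩
      ⟨f (A.orderEmbOfCardLe hAcard v), hflt _⟩).symm.trans h2

/-- The pentagon-like table used for the lower-bound coloring. -/
private def chi (i j : ℕ) : Fin 2 :=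
  if (i, j) ∈ ([(1,1),(1,3),(1,4),(2,2),(2,4),(3,4)] : List (ℕ × ℕ)) then 1 else 0

private lemma chi_key : ∀ a b c d : Fin 5, a < b → b ≤ c → c < d →
    ¬ (chi ↑a ↑c = chi ↑b ↑c ∧ chi ↑b ↑d = chi ↑b ↑c) := by decide

/-- Gap estimate for a strictly monotone map between `Fin`s. -/
private lemma strictMono_gap {M N : ℕ} {f : Fin M → Fin N} (hf : StrictMono f) :
    ∀ (d : ℕ) (i j : Fin M), (i : ℕ) + d = (j : ℕ) → (f i : ℕ) + d ≤ (f j : ℕ) := by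
  intro d
  induction d with
  | zero =>
      intro i j h
      have : i = j := Fin.ext (by omega)
      subst this
      simp
  | succ d ih =>
      intro i j h
      have hjlt : (i : ℕ) + d < M := by have := j.isLt; omega
      have h1 := ih i ⟨(i : ℕ) + d, hjlt⟩ rfl
      have h2 : f ⟨(i : ℕ) + d, hjlt⟩ < f j := hf (by rw [Fin.lt_def]; simp; omega)
      rw [Fin.lt_def] at h2
      omega

/-- If `G` is a 2-ichromatic ordered graph with parts `v_1,…,v_m` and
`v_{m+1},…,v_{m+n}` having edges `v_1 v_{m+1}`, `v_m v_{m+n}`, and `v_m v_{m+1}`,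
then `R(G) ≥ 5r + 1` where `r = min(m,n) - 1`. -/
theorem stmt2 {m n : ℕ} (hm : 1 ≤ m) (hn : 1 ≤ n)
    (G : SimpleGraph (Fin (m + n)))
    (hichrom : intervalChromatic G = 2)
    (hpart1 : ∀ u v : Fin (m + n), (u : ℕ) < m → (v : ℕ) < m → ¬ G.Adj u v)
    (hpart2 : ∀ u v : Fin (m + n), m ≤ (u : ℕ) → m ≤ (v : ℕ) → ¬ G.Adj u v)
    (hedge1 : G.Adj ⟨0, by omega⟩ ⟨m, by omega⟩)
    (hedge2 : G.Adj ⟨m - 1, by omega⟩ ⟨m + n - 1, by omega⟩)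
    (hedge3 : G.Adj ⟨m - 1, by omega⟩ ⟨m, by omega⟩) :
    5 * (min m n - 1) + 1 ≤ orderedRamsey 2 G := by
  set r := min m n - 1 with hr
  refine le_csInf ⟨2 ^ (2 * (m + n)), ?_⟩ ?_
  · intro c
    exact ramsey_exists G c
  intro N hN
  by_contra hcon
  push_neg at hcon
  have hNle : N ≤ 5 * r := by omega
  rcases Nat.eq_zero_or_pos r with hr0 | hrpos
  · -- then N = 0, but a copy of G needs vertices
    have hN0 : N = 0 := by omega
    obtain ⟨k, f, -, -⟩ := hN (fun _ _ => 0)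
    have hv := f ⟨0, by omega⟩
    rw [hN0] at hv
    exact hv.elim0
  · -- the lower-bound coloring
    obtain ⟨k, f, hmono, hcol⟩ := hN (fun x y => chi ((x : ℕ) / r) ((y : ℕ) / r))
    obtain ⟨u1, u2, u3, u4, e1, e2, e3, e4⟩ :
        ∃ u1 u2 u3 u4 : Fin (m + n),
          (u1 : ℕ) = 0 ∧ (u2 : ℕ) = m - 1 ∧ (u3 : ℕ) = m ∧ (u4 : ℕ) = m + n - 1 :=
      ⟨⟨0, by omega⟩, ⟨m - 1, by omega⟩, ⟨m, by omega⟩, ⟨m + n - 1, by omega⟩,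
        rfl, rfl, rfl, rfl⟩
    have hu1 : u1 = ⟨0, by omega⟩ := Fin.ext e1
    have hu2 : u2 = ⟨m - 1, by omega⟩ := Fin.ext e2
    have hu3 : u3 = ⟨m, by omega⟩ := Fin.ext e3
    have hu4 : u4 = ⟨m + n - 1, by omega⟩ := Fin.ext e4
    have hrm : r + 1 ≤ m := by omega
    have hrn : r + 1 ≤ n := by omega
    have h13 : chi ((↑(f u1)) / r) ((↑(f u3)) / r) = k :=
      hcol u1 u3 (by rw [Fin.lt_def, e1, e3]; omega) (by simp only [hu1, hu3]; exact hedge1)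
    have h24 : chi ((↑(f u2)) / r) ((↑(f u4)) / r) = k :=
      hcol u2 u4 (by rw [Fin.lt_def, e2, e4]; omega) (by simp only [hu2, hu4]; exact hedge2)
    have h23 : chi ((↑(f u2)) / r) ((↑(f u3)) / r) = k :=
      hcol u2 u3 (by rw [Fin.lt_def, e2, e3]; omega) (by simp only [hu2, hu3]; exact hedge3)
    have h12 : (↑(f u1) : ℕ) + (m - 1) ≤ ↑(f u2) :=
      strictMono_gap hmono (m - 1) u1 u2 (by omega)
    have h34 : (↑(f u3) : ℕ) + (n - 1) ≤ ↑(f u4) :=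
      strictMono_gap hmono (n - 1) u3 u4 (by omega)
    have h23' : (↑(f u2) : ℕ) < ↑(f u3) := by
      have := hmono (show u2 < u3 by rw [Fin.lt_def, e2, e3]; omega)
      rwa [Fin.lt_def] at this
    have hx4 : (↑(f u4) : ℕ) < 5 * r := lt_of_lt_of_le (f u4).isLt hNle
    have hdivlt : ∀ x : ℕ, x < 5 * r → x / r < 5 :=
      fun x hx => (Nat.div_lt_iff_lt_mul hrpos).mpr (by omega)
    have hd1 : (↑(f u1) : ℕ) / r < 5 := hdivlt _ (by omega)
    have hd2 : (↑(f u2) : ℕ) / r < 5 := hdivlt _ (by omega)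
    have hd3 : (↑(f u3) : ℕ) / r < 5 := hdivlt _ (by omega)
    have hd4 : (↑(f u4) : ℕ) / r < 5 := hdivlt _ hx4
    have hlt12 : (↑(f u1) : ℕ) / r < (↑(f u2) : ℕ) / r := by
      have ha : ((↑(f u1) : ℕ) + r) / r ≤ (↑(f u2) : ℕ) / r := Nat.div_le_div_right (by omega)
      have hb : ((↑(f u1) : ℕ) + r) / r = (↑(f u1) : ℕ) / r + 1 := Nat.add_div_right _ hrpos
      omega
    have hle23 : (↑(f u2) : ℕ) / r ≤ (↑(f u3) : ℕ) / r := Nat.div_le_div_right (by omega)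
    have hlt34 : (↑(f u3) : ℕ) / r < (↑(f u4) : ℕ) / r := by
      have ha : ((↑(f u3) : ℕ) + r) / r ≤ (↑(f u4) : ℕ) / r := Nat.div_le_div_right (by omega)
      have hb : ((↑(f u3) : ℕ) + r) / r = (↑(f u3) : ℕ) / r + 1 := Nat.add_div_right _ hrpos
      omega
    exact chi_key ⟨_, hd1⟩ ⟨_, hd2⟩ ⟨_, hd3⟩ ⟨_, hd4⟩
      (Fin.mk_lt_mk.mpr hlt12) (Fin.mk_le_mk.mpr hle23) (Fin.mk_lt_mk.mpr hlt34)
      ⟨h13.trans h23.symm, h24.trans h23.symm⟩
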